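/- For every real γ with 0 < γ < 2, the stability bound B₁(γ, n) = 2 / (∑_{m=0}^{n} (−1)^m ψ(γ, m)) converges to B₂(γ) = 2^γ as n → ∞. -/

import Mathlib

open Finset Filter

/-- Generalized binomial coefficient `C(x, m) = x (x-1) ⋯ (x-m+1) / m!`. -/
noncomputable def genBinom (x : ℝ) (m : ℕ) : ℝ :=
  (descPochhammer ℝ m).eval x / m.factorial

/-- Memory function `ψ(γ, m) = (-1)^m ⬝ C(1-γ, m)`. -/
noncomputable def psi (γ : ℝ) (m : ℕ) : ℝ :=
  (-1) ^ m * genBinom (1 - γ) m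

lemma genBinom_zero (x : ℝ) : genBinom x 0 = 1 := by
  simp [genBinom]

lemma genBinom_one (x : ℝ) : genBinom x 1 = x := by
  simp [genBinom]

lemma genBinom_succ (x : ℝ) (m : ℕ) :
    ((m : ℝ) + 1) * genBinom x (m + 1) = genBinom x m * (x - m) := by
  have hm : (m.factorial : ℝ) ≠ 0 := Nat.cast_ne_zero.2 m.factorial_ne_zero
  have hm1 : ((m : ℝ) + 1) ≠ 0 := by positivity
  rw [genBinom, genBinom, descPochhammer_succ_eval, Nat.factorial_succ]
  push_cast
  field_simp

/-- The key algebraic identity for the partial sums of the binomial series. -/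
lemma key_identity (a t : ℝ) (N : ℕ) :
    (1 + t) * (∑ m ∈ Finset.range (N + 1), genBinom a m * (m * t ^ (m - 1)))
      - a * (∑ m ∈ Finset.range (N + 1), genBinom a m * t ^ m)
    = -(((N : ℝ) + 1) * genBinom a (N + 1) * t ^ N) := by
  induction N with
  | zero =>
    simp [genBinom_zero, genBinom_one]
  | succ N ih =>
    rw [Finset.sum_range_succ (f := fun m => genBinom a m * (m * t ^ (m - 1))),
      Finset.sum_range_succ (f := fun m => genBinom a m * t ^ m)]
    have hrec := genBinom_succ a (N + 1)
    push_cast at hrec ⊢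
    linear_combination ih + t ^ (N + 1) * hrec

lemma abs_genBinom_succ_tendsto (a : ℝ) (ha1 : -1 < a) (ha2 : a < 1) :
    Filter.Tendsto (fun k : ℕ => |genBinom a (k + 1)|) atTop (nhds 0) := by
  set b : ℝ := 1 + a with hb
  have hb0 : 0 < b := by simp [hb]; linarith
  have hb2 : b < 2 := by simp [hb]; linarith
  -- the recurrence for absolute values
  have h1 : ∀ m : ℕ, 1 ≤ m →
      |genBinom a (m + 1)| = |genBinom a m| * (1 - b / ((m : ℝ) + 1)) := by
    intro m hm
    have hm1 : ((m : ℝ) + 1) ≠ 0 := by positivity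
    have h := genBinom_succ a m
    have hval : genBinom a (m + 1) = genBinom a m * (a - m) / ((m : ℝ) + 1) := by
      field_simp at h ⊢; linarith [h]
    rw [hval]
    rw [abs_div, abs_mul]
    have hma : a - (m : ℝ) ≤ 0 := by
      have : (1 : ℝ) ≤ m := by exact_mod_cast hm
      linarith
    rw [abs_of_nonpos hma, abs_of_pos (show (0:ℝ) < (m : ℝ) + 1 by positivity)]
    rw [mul_div_assoc]
    congr 1
    field_simp [hb]
    ring
  -- bound by an exponential of partial harmonic sums
  have hbd : ∀ k : ℕ, |genBinom a (k + 1)| ≤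
      |a| * Real.exp (-(b * ∑ j ∈ Finset.range k, (1 : ℝ) / (j + 2))) := by
    intro k
    induction k with
    | zero => simp [genBinom_one]
    | succ k ih =>
      have hk1 : (1 : ℕ) ≤ k + 1 := by omega
      rw [h1 (k + 1) hk1]
      push_cast
      have hfac0 : 0 ≤ 1 - b / ((k : ℝ) + 1 + 1) := by
        have h2 : b / ((k : ℝ) + 2) < 1 := by
          rw [div_lt_one (by positivity)]
          have : (0:ℝ) ≤ (k : ℝ) := Nat.cast_nonneg k
          linarith
        have : ((k : ℝ) + 1 + 1) = (k : ℝ) + 2 := by ring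
        rw [this]; linarith
      have hfac : 1 - b / ((k : ℝ) + 1 + 1) ≤ Real.exp (-(b / ((k : ℝ) + 2))) := by
        have := Real.add_one_le_exp (-(b / ((k : ℝ) + 2)))
        have h22 : ((k : ℝ) + 1 + 1) = (k : ℝ) + 2 := by ring
        rw [h22]; linarith
      calc |genBinom a (k + 1)| * (1 - b / ((k : ℝ) + 1 + 1))
          ≤ (|a| * Real.exp (-(b * ∑ j ∈ Finset.range k, (1 : ℝ) / (j + 2)))) *
            Real.exp (-(b / ((k : ℝ) + 2))) := by
            apply mul_le_mul ih hfac hfac0 (by positivity)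
        _ = |a| * Real.exp (-(b * ∑ j ∈ Finset.range (k + 1), (1 : ℝ) / (j + 2))) := by
            rw [mul_assoc, ← Real.exp_add, Finset.sum_range_succ]
            congr 2
            ring
  -- the harmonic-type sum tends to infinity
  have hH : Tendsto (fun k : ℕ => ∑ j ∈ Finset.range k, (1 : ℝ) / (j + 2)) atTop atTop := by
    have h0 := Real.tendsto_sum_range_one_div_nat_succ_atTop
    have hshift : Tendsto (fun k : ℕ => ∑ i ∈ Finset.range (k + 1), (1 / ((i : ℝ) + 1))) atTop atTop :=
      h0.comp (tendsto_add_atTop_nat 1)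
    have hcast : ∀ i : ℕ, (1 : ℝ) / ((((i : ℕ) + 1 : ℕ) : ℝ) + 1) = 1 / ((i : ℝ) + 2) := by
      intro i; push_cast; ring_nf
    have heq : ∀ k : ℕ, ∑ j ∈ Finset.range k, (1 : ℝ) / (j + 2)
        = (∑ i ∈ Finset.range (k + 1), (1 / ((i : ℝ) + 1))) - 1 := by
      intro k
      rw [Finset.sum_range_succ' (f := fun i => (1 : ℝ) / ((i : ℝ) + 1))]
      simp only [hcast]
      norm_num
    have := tendsto_atTop_add_const_right atTop (-1 : ℝ) hshift
    refine Tendsto.congr (fun k => ?_) this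
    rw [heq k]; ring
  -- conclude by squeezing
  have hexp : Tendsto (fun k : ℕ => |a| * Real.exp (-(b * ∑ j ∈ Finset.range k, (1 : ℝ) / (j + 2))))
      atTop (nhds 0) := by
    have h1' : Tendsto (fun k : ℕ => b * ∑ j ∈ Finset.range k, (1 : ℝ) / (j + 2)) atTop atTop :=
      hH.const_mul_atTop hb0
    have h2' : Tendsto (fun k : ℕ => -(b * ∑ j ∈ Finset.range k, (1 : ℝ) / (j + 2))) atTop atBot :=
      tendsto_neg_atTop_atBot.comp h1'
    have h3' := Real.tendsto_exp_atBot.comp h2'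
    have := h3'.const_mul |a|
    simpa using this
  refine squeeze_zero (fun k => abs_nonneg _) hbd hexp

lemma sum_genBinom_tendsto (a : ℝ) (ha1 : -1 < a) (ha2 : a < 1) :
    Filter.Tendsto (fun n : ℕ => ∑ m ∈ Finset.range (n + 1), genBinom a m)
      atTop (nhds ((2 : ℝ) ^ a)) := by
  set c : ℕ → ℝ := genBinom a with hc
  -- the key quantitative estimate
  have key : ∀ N : ℕ,
      |(∑ m ∈ Finset.range (N + 1), c m) * (2 : ℝ) ^ (-a) - 1| ≤ |c (N + 1)| := by
    intro N
    set g : ℝ → ℝ := fun t => (∑ m ∈ Finset.range (N + 1), c m * t ^ m) * (1 + t) ^ (-a) with hg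
    set D : ℝ → ℝ := fun t => -(((N : ℝ) + 1) * c (N + 1)) * (t ^ N * (1 + t) ^ (-a - 1)) with hD
    have huIcc : Set.uIcc (0 : ℝ) 1 = Set.Icc 0 1 := Set.uIcc_of_le zero_le_one
    have hderiv : ∀ t ∈ Set.uIcc (0 : ℝ) 1, HasDerivAt g (D t) t := by
      intro t ht
      rw [huIcc] at ht
      have hpos : 0 < 1 + t := by linarith [ht.1]
      have hF : HasDerivAt (fun x : ℝ => ∑ m ∈ Finset.range (N + 1), c m * x ^ m)
          (∑ m ∈ Finset.range (N + 1), c m * ((m : ℝ) * t ^ (m - 1))) t := by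
        apply HasDerivAt.fun_sum
        intro m _
        exact (hasDerivAt_pow m t).const_mul (c m)
      have hR : HasDerivAt (fun x : ℝ => (1 + x) ^ (-a)) (-a * (1 + t) ^ (-a - 1)) t := by
        have h1 : HasDerivAt (fun x : ℝ => 1 + x) 1 t := by
          simpa using (hasDerivAt_id t).const_add (1 : ℝ)
        have h2 := Real.hasDerivAt_rpow_const (x := 1 + t) (p := -a) (Or.inl hpos.ne')
        simpa [Function.comp_def] using h2.comp t h1
      have hmul := hF.mul hR
      refine HasDerivAt.congr_deriv hmul ?_
      have hid := key_identity a t N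
      have hsplit : (1 + t) ^ (-a) = (1 + t) ^ (-a - 1) * (1 + t) := by
        have := Real.rpow_add_one hpos.ne' (-a - 1)
        rw [show -a - 1 + 1 = -a by ring] at this
        exact this
      rw [hD, hsplit]
      simp only [hc] at hid ⊢
      linear_combination ((1 + t) ^ (-a - 1)) * hid
    have hcont : ContinuousOn D (Set.uIcc (0 : ℝ) 1) := by
      rw [huIcc]
      apply ContinuousOn.mul continuousOn_const
      apply ContinuousOn.mul (Continuous.continuousOn (by continuity))
      apply ContinuousOn.rpow_const
      · exact (continuous_const.add continuous_id).continuousOn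
      · intro x hx
        left
        have : (0 : ℝ) ≤ x := hx.1
        positivity
    have hint : IntervalIntegrable D MeasureTheory.volume 0 1 :=
      hcont.intervalIntegrable
    have hFTC := intervalIntegral.integral_eq_sub_of_hasDerivAt hderiv hint
    -- compute g 0 and g 1
    have hg0 : g 0 = 1 := by
      rw [hg]
      simp only []
      have hsum0 : (∑ m ∈ Finset.range (N + 1), c m * (0 : ℝ) ^ m) = 1 := by
        rw [Finset.sum_eq_single 0]
        · simp [hc, genBinom_zero]
        · intro m _ hm
          simp [zero_pow hm]
        · intro h
          exact absurd (Finset.mem_range.2 (Nat.succ_pos N)) h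
      rw [hsum0]
      norm_num
    have hg1 : g 1 = (∑ m ∈ Finset.range (N + 1), c m) * (2 : ℝ) ^ (-a) := by
      rw [hg]
      norm_num
    -- the integral with the constant pulled out
    set I : ℝ := ∫ t in (0:ℝ)..1, t ^ N * (1 + t) ^ (-a - 1) with hI
    have hDint : (∫ t in (0:ℝ)..1, D t) = -(((N : ℝ) + 1) * c (N + 1)) * I := by
      rw [hI, hD, intervalIntegral.integral_const_mul]
    -- bounds on I
    have hI0 : 0 ≤ I := by
      rw [hI]
      apply intervalIntegral.integral_nonneg zero_le_one
      intro t ht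
      have h0t : (0 : ℝ) ≤ t := ht.1
      have : (0 : ℝ) ≤ 1 + t := by linarith
      positivity
    have hI1 : I ≤ 1 / ((N : ℝ) + 1) := by
      have hmono : I ≤ ∫ t in (0:ℝ)..1, t ^ N := by
        rw [hI]
        apply intervalIntegral.integral_mono_on zero_le_one
        · have : ContinuousOn (fun t : ℝ => t ^ N * (1 + t) ^ (-a - 1)) (Set.uIcc (0:ℝ) 1) := by
            rw [huIcc]
            apply ContinuousOn.mul (Continuous.continuousOn (by continuity))
            apply ContinuousOn.rpow_const
            · exact (continuous_const.add continuous_id).continuousOn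
            · intro x hx
              left
              have : (0 : ℝ) ≤ x := hx.1
              positivity
          exact this.intervalIntegrable
        · exact (continuous_pow N).intervalIntegrable 0 1
        · intro t ht
          have h0t : (0 : ℝ) ≤ t := ht.1
          have h1t : (1 : ℝ) ≤ 1 + t := by linarith
          have hle1 : (1 + t) ^ (-a - 1) ≤ 1 :=
            Real.rpow_le_one_of_one_le_of_nonpos h1t (by linarith)
          calc t ^ N * (1 + t) ^ (-a - 1) ≤ t ^ N * 1 := by
                apply mul_le_mul_of_nonneg_left hle1 (pow_nonneg h0t N)
            _ = t ^ N := mul_one _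
      have hpow : (∫ t in (0:ℝ)..1, t ^ N) = 1 / ((N : ℝ) + 1) := by
        rw [integral_pow]
        norm_num
      linarith
    -- put it together
    rw [hg0, hg1, hDint] at hFTC
    have heq : (∑ m ∈ Finset.range (N + 1), c m) * (2 : ℝ) ^ (-a) - 1
        = -(((N : ℝ) + 1) * c (N + 1)) * I := hFTC.symm
    rw [heq]
    rw [abs_mul, abs_neg, abs_mul, abs_of_nonneg hI0,
      abs_of_pos (show (0:ℝ) < (N : ℝ) + 1 by positivity)]
    calc ((N : ℝ) + 1) * |c (N + 1)| * I ≤ ((N : ℝ) + 1) * |c (N + 1)| * (1 / ((N : ℝ) + 1)) := by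
          apply mul_le_mul_of_nonneg_left hI1 (by positivity)
      _ = |c (N + 1)| := by
          field_simp
    -- done with key
  -- now conclude
  have habs := abs_genBinom_succ_tendsto a ha1 ha2
  have htend0 : Tendsto (fun N : ℕ => (∑ m ∈ Finset.range (N + 1), c m) * (2 : ℝ) ^ (-a) - 1)
      atTop (nhds 0) :=
    squeeze_zero_norm (fun N => key N) habs
  have htend1 : Tendsto (fun N : ℕ => (∑ m ∈ Finset.range (N + 1), c m) * (2 : ℝ) ^ (-a))
      atTop (nhds 1) := by
    have := htend0.add_const 1
    simpa using this
  have := htend1.mul_const ((2 : ℝ) ^ a)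
  have h2a : (2 : ℝ) ^ (-a) * (2 : ℝ) ^ a = 1 := by
    rw [← Real.rpow_add two_pos]
    norm_num
  refine Tendsto.congr (fun N => ?_) (by simpa using this)
  rw [mul_assoc, h2a, mul_one]

theorem B1_tendsto_B2 (γ : ℝ) (hγ0 : 0 < γ) (hγ2 : γ < 2) :
    Filter.Tendsto
      (fun n : ℕ => 2 / ∑ m ∈ Finset.range (n + 1), (-1 : ℝ) ^ m * psi γ m)
      Filter.atTop (nhds ((2 : ℝ) ^ γ)) := by
  have ha1 : -1 < 1 - γ := by linarith
  have ha2 : 1 - γ < 1 := by linarith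
  have hsum : ∀ n : ℕ, ∑ m ∈ Finset.range (n + 1), (-1 : ℝ) ^ m * psi γ m
      = ∑ m ∈ Finset.range (n + 1), genBinom (1 - γ) m := by
    intro n
    apply Finset.sum_congr rfl
    intro m _
    rw [psi, ← mul_assoc, ← mul_pow]
    norm_num
  have hS := sum_genBinom_tendsto (1 - γ) ha1 ha2
  have h2 : ((2 : ℝ) ^ (1 - γ)) ≠ 0 := (Real.rpow_pos_of_pos two_pos _).ne'
  have hdiv := Tendsto.div (tendsto_const_nhds (x := (2 : ℝ)) (f := atTop)) hS h2
  have hlim : (2 : ℝ) / (2 : ℝ) ^ (1 - γ) = (2 : ℝ) ^ γ := by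
    rw [eq_comm, eq_div_iff h2, ← Real.rpow_add two_pos]
    norm_num
  rw [← hlim]
  refine Tendsto.congr (fun n => ?_) hdiv
  rw [Pi.div_apply, hsum n]
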